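/- For any measurable h₀*, h₁* ∈ H, the benefit-of-splitting satisfies ε_split ≥ (1/2) max_{s∈{0,1}} E_{X∼P_s}[|h₁*(X) − h₀*(X)|] − D_TV(P₀, P₁) − (3/2)(L₀(h₀*) + L₁(h₁*)). -/

import Mathlib

open MeasureTheory

/-- Group risk under ℓ₁ loss. -/
noncomputable def risk {X : Type*} [MeasurableSpace X]
    (P : Measure X) (y h : X → ℝ) : ℝ := ∫ x, |h x - y x| ∂P

/-- Total variation distance `sup_E |P₀(E) − P₁(E)|` over measurable sets. -/
noncomputable def tvDist {X : Type*} [MeasurableSpace X] (P Q : Measure X) : ℝ :=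
  sSup {d | ∃ E : Set X, MeasurableSet E ∧ d = |(P E).toReal - (Q E).toReal|}

/-- Benefit-of-splitting. -/
noncomputable def benefitOfSplitting {X : Type*} [MeasurableSpace X]
    (P₀ P₁ : Measure X) (y₀ y₁ : X → ℝ) (H : Set (X → ℝ)) : ℝ :=
  sInf ((fun h => max (risk P₀ y₀ h) (risk P₁ y₁ h)) '' H)
    - max (sInf (risk P₀ y₀ '' H)) (sInf (risk P₁ y₁ '' H))

lemma tv_bdd {X : Type*} [MeasurableSpace X] (P Q : Measure X)
    [IsProbabilityMeasure P] [IsProbabilityMeasure Q] :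
    BddAbove {d | ∃ E : Set X, MeasurableSet E ∧ d = |(P E).toReal - (Q E).toReal|} := by
  refine ⟨1, fun d ⟨E, hE, hd⟩ => ?_⟩
  have h1 : (P E).toReal ≤ 1 := ENNReal.toReal_le_of_le_ofReal one_pos.le (by simpa using prob_le_one)
  have h2 : (Q E).toReal ≤ 1 := ENNReal.toReal_le_of_le_ofReal one_pos.le (by simpa using prob_le_one)
  have h3 : 0 ≤ (P E).toReal := ENNReal.toReal_nonneg
  have h4 : 0 ≤ (Q E).toReal := ENNReal.toReal_nonneg
  rw [hd, abs_le]; constructor <;> linarith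

lemma tv_nonneg {X : Type*} [MeasurableSpace X] (P Q : Measure X)
    [IsProbabilityMeasure P] [IsProbabilityMeasure Q] : 0 ≤ tvDist P Q :=
  le_csSup (tv_bdd P Q) ⟨∅, MeasurableSet.empty, by simp⟩

lemma tv_comm {X : Type*} [MeasurableSpace X] (P Q : Measure X) :
    tvDist P Q = tvDist Q P := by
  unfold tvDist
  congr 1
  ext d
  constructor
  · rintro ⟨E, hE, rfl⟩; exact ⟨E, hE, (abs_sub_comm _ _)⟩
  · rintro ⟨E, hE, rfl⟩; exact ⟨E, hE, (abs_sub_comm _ _)⟩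

lemma integral_le_integral_add_tv {X : Type*} [MeasurableSpace X] (P Q : Measure X)
    [IsProbabilityMeasure P] [IsProbabilityMeasure Q] (f : X → ℝ) (hf : Measurable f)
    (h0 : ∀ x, 0 ≤ f x) (h1 : ∀ x, f x ≤ 1) :
    ∫ x, f x ∂P ≤ (∫ x, f x ∂Q) + tvDist P Q := by
  have hintP : Integrable f P := by
    refine ⟨hf.aestronglyMeasurable, HasFiniteIntegral.of_bounded (C := 1) ?_⟩
    filter_upwards with x
    rw [Real.norm_eq_abs, abs_le]; exact ⟨by linarith [h0 x], h1 x⟩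
  have hintQ : Integrable f Q := by
    refine ⟨hf.aestronglyMeasurable, HasFiniteIntegral.of_bounded (C := 1) ?_⟩
    filter_upwards with x
    rw [Real.norm_eq_abs, abs_le]; exact ⟨by linarith [h0 x], h1 x⟩
  rw [hintP.integral_eq_integral_Ioc_meas_le (M := 1) (ae_of_all _ h0) (ae_of_all _ h1),
      hintQ.integral_eq_integral_Ioc_meas_le (M := 1) (ae_of_all _ h0) (ae_of_all _ h1)]
  set F : ℝ → ℝ := fun t => (P {a | t ≤ f a}).toReal with hF
  set G : ℝ → ℝ := fun t => (Q {a | t ≤ f a}).toReal with hG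
  have hFanti : Antitone F := fun s t hst =>
    ENNReal.toReal_le_toReal (measure_ne_top _ _) (measure_ne_top _ _) |>.mpr
      (measure_mono (fun a ha => le_trans hst ha))
  have hGanti : Antitone G := fun s t hst =>
    ENNReal.toReal_le_toReal (measure_ne_top _ _) (measure_ne_top _ _) |>.mpr
      (measure_mono (fun a ha => le_trans hst ha))
  have hFint : IntegrableOn F (Set.Ioc 0 1) := by
    refine ⟨(hFanti.measurable).aestronglyMeasurable, ?_⟩
    apply HasFiniteIntegral.of_bounded (C := 1)
    filter_upwards with t
    rw [Real.norm_eq_abs, abs_of_nonneg ENNReal.toReal_nonneg]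
    exact ENNReal.toReal_le_of_le_ofReal one_pos.le (by simpa using prob_le_one)
  have hGint : IntegrableOn G (Set.Ioc 0 1) := by
    refine ⟨(hGanti.measurable).aestronglyMeasurable, ?_⟩
    apply HasFiniteIntegral.of_bounded (C := 1)
    filter_upwards with t
    rw [Real.norm_eq_abs, abs_of_nonneg ENNReal.toReal_nonneg]
    exact ENNReal.toReal_le_of_le_ofReal one_pos.le (by simpa using prob_le_one)
  have key : ∀ t ∈ Set.Ioc (0:ℝ) 1, F t ≤ G t + tvDist P Q := by
    intro t _
    have hmeas : MeasurableSet {a | t ≤ f a} := hf measurableSet_Ici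
    have hmem := le_csSup (tv_bdd P Q)
      (⟨_, hmeas, rfl⟩ : |F t - G t| ∈ {d | ∃ E : Set X, MeasurableSet E ∧ d = |(P E).toReal - (Q E).toReal|})
    have habs : F t - G t ≤ |F t - G t| := le_abs_self _
    unfold tvDist
    linarith
  calc ∫ t in Set.Ioc (0:ℝ) 1, F t
      ≤ ∫ t in Set.Ioc (0:ℝ) 1, (G t + tvDist P Q) :=
        setIntegral_mono_on hFint (hGint.add (integrableOn_const (by simp)))
          measurableSet_Ioc key
    _ = (∫ t in Set.Ioc (0:ℝ) 1, G t) + tvDist P Q := by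
        rw [integral_add hGint (integrableOn_const (by simp))]
        simp [Real.volume_Ioc]

lemma abs_diff_int {X : Type*} [MeasurableSpace X] (P : Measure X) [IsProbabilityMeasure P]
    {h g : X → ℝ} (hh : Measurable h) (hg : Measurable g)
    (hh01 : ∀ x, h x ∈ Set.Icc (0:ℝ) 1) (hg01 : ∀ x, g x ∈ Set.Icc (0:ℝ) 1) :
    Integrable (fun x => |h x - g x|) P := by
  refine ⟨((hh.sub hg).abs).aestronglyMeasurable, HasFiniteIntegral.of_bounded (C := 1) ?_⟩
  filter_upwards with x
  rw [Real.norm_eq_abs, abs_abs, abs_le]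
  obtain ⟨a, b⟩ := hh01 x; obtain ⟨c, d⟩ := hg01 x
  constructor <;> linarith

theorem benefitOfSplitting_lower_bound {X : Type*} [MeasurableSpace X]
    (P₀ P₁ : Measure X) [IsProbabilityMeasure P₀] [IsProbabilityMeasure P₁]
    (y₀ y₁ : X → ℝ) (hy₀ : Measurable y₀) (hy₁ : Measurable y₁)
    (hy₀01 : ∀ x, y₀ x ∈ Set.Icc (0:ℝ) 1) (hy₁01 : ∀ x, y₁ x ∈ Set.Icc (0:ℝ) 1)
    (H : Set (X → ℝ))
    (hHmeas : ∀ h ∈ H, Measurable h ∧ ∀ x, h x ∈ Set.Icc (0:ℝ) 1)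
    (h₀ h₁ : X → ℝ) (h₀H : h₀ ∈ H) (h₁H : h₁ ∈ H) :
    benefitOfSplitting P₀ P₁ y₀ y₁ H ≥
      (1 / 2) * max (∫ x, |h₁ x - h₀ x| ∂P₀) (∫ x, |h₁ x - h₀ x| ∂P₁)
        - tvDist P₀ P₁ - (3 / 2) * (risk P₀ y₀ h₀ + risk P₁ y₁ h₁) := by
  obtain ⟨hm₀, hb₀⟩ := hHmeas h₀ h₀H
  obtain ⟨hm₁, hb₁⟩ := hHmeas h₁ h₁H
  set L₀ := risk P₀ y₀ h₀ with hL₀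
  set L₁ := risk P₁ y₁ h₁ with hL₁
  set A := ∫ x, |h₁ x - h₀ x| ∂P₀ with hA
  set B := ∫ x, |h₁ x - h₀ x| ∂P₁ with hB
  set TV := tvDist P₀ P₁ with hTVdef
  have hTV : 0 ≤ TV := tv_nonneg P₀ P₁
  have risk_nonneg : ∀ (P : Measure X) (y g : X → ℝ), 0 ≤ risk P y g :=
    fun P y g => integral_nonneg fun x => abs_nonneg _
  -- Step 1: lower bound the inf of max
  have step1 : sInf ((fun h => max (risk P₀ y₀ h) (risk P₁ y₁ h)) '' H) ≥
      (1/2) * max A B - (1/2) * TV - (1/2) * (L₀ + L₁) := by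
    apply le_csInf (Set.Nonempty.image _ ⟨h₀, h₀H⟩)
    rintro r ⟨h, hH, rfl⟩
    obtain ⟨hm, hb⟩ := hHmeas h hH
    have tri : ∀ (P : Measure X) [IsProbabilityMeasure P] (y g : X → ℝ),
        Measurable y → (∀ x, y x ∈ Set.Icc (0:ℝ) 1) →
        Measurable g → (∀ x, g x ∈ Set.Icc (0:ℝ) 1) →
        ∫ x, |h x - g x| ∂P ≤ risk P y h + risk P y g := by
      intro P _ y g hy hy01 hg hg01
      have i1 := abs_diff_int P hm hy hb hy01
      have i2 := abs_diff_int P hg hy hg01 hy01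
      calc ∫ x, |h x - g x| ∂P ≤ ∫ x, (|h x - y x| + |g x - y x|) ∂P := by
            apply integral_mono (abs_diff_int P hm hg hb hg01) (i1.add i2)
            intro x
            calc |h x - g x| = |(h x - y x) - (g x - y x)| := by ring_nf
              _ ≤ |h x - y x| + |g x - y x| := abs_sub _ _
        _ = risk P y h + risk P y g := integral_add i1 i2
    set a₀ := ∫ x, |h x - h₀ x| ∂P₀ with ha₀
    set b₀ := ∫ x, |h x - h₁ x| ∂P₀ with hb₀'
    set a₁ := ∫ x, |h x - h₀ x| ∂P₁ with ha₁
    set b₁ := ∫ x, |h x - h₁ x| ∂P₁ with hb₁'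
    have e₀ : a₀ ≤ risk P₀ y₀ h + L₀ := tri P₀ y₀ h₀ hy₀ hy₀01 hm₀ hb₀
    have e₁ : b₁ ≤ risk P₁ y₁ h + L₁ := tri P₁ y₁ h₁ hy₁ hy₁01 hm₁ hb₁
    have bnd : ∀ g : X → ℝ, (∀ x, g x ∈ Set.Icc (0:ℝ) 1) →
        (∀ x, 0 ≤ |h x - g x|) ∧ (∀ x, |h x - g x| ≤ 1) := by
      intro g hg01
      refine ⟨fun x => abs_nonneg _, fun x => ?_⟩
      obtain ⟨c, d⟩ := hb x; obtain ⟨e, f⟩ := hg01 x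
      rw [abs_le]; constructor <;> linarith
    have mv₀ : b₀ ≤ b₁ + TV :=
      integral_le_integral_add_tv P₀ P₁ _ ((hm.sub hm₁).abs)
        (bnd h₁ hb₁).1 (bnd h₁ hb₁).2
    have mv₁ : a₁ ≤ a₀ + TV := by
      have := integral_le_integral_add_tv P₁ P₀ _ ((hm.sub hm₀).abs)
        (bnd h₀ hb₀).1 (bnd h₀ hb₀).2
      rwa [tv_comm P₁ P₀] at this
    have triA : ∀ (P : Measure X) [IsProbabilityMeasure P],
        ∫ x, |h₁ x - h₀ x| ∂P ≤ (∫ x, |h x - h₀ x| ∂P) + ∫ x, |h x - h₁ x| ∂P := by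
      intro P _
      have i1 := abs_diff_int P hm hm₀ hb hb₀
      have i2 := abs_diff_int P hm hm₁ hb hb₁
      calc ∫ x, |h₁ x - h₀ x| ∂P ≤ ∫ x, (|h x - h₀ x| + |h x - h₁ x|) ∂P := by
            apply integral_mono (abs_diff_int P hm₁ hm₀ hb₁ hb₀) (i1.add i2)
            intro x
            calc |h₁ x - h₀ x| = |(h x - h₀ x) - (h x - h₁ x)| := by ring_nf
              _ ≤ |h x - h₀ x| + |h x - h₁ x| := abs_sub _ _
        _ = _ := integral_add i1 i2
    have hAle : A ≤ a₀ + b₀ := triA P₀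
    have hBle : B ≤ a₁ + b₁ := triA P₁
    have hsum : max A B ≤ risk P₀ y₀ h + risk P₁ y₁ h + TV + (L₀ + L₁) := by
      apply max_le <;> linarith
    have hmax : risk P₀ y₀ h + risk P₁ y₁ h ≤
        2 * max (risk P₀ y₀ h) (risk P₁ y₁ h) := by
      have := le_max_left (risk P₀ y₀ h) (risk P₁ y₁ h)
      have := le_max_right (risk P₀ y₀ h) (risk P₁ y₁ h)
      linarith
    linarith
  -- Step 2: upper bound max of infs
  have inf₀ : sInf (risk P₀ y₀ '' H) ≤ L₀ :=
    csInf_le ⟨0, fun r ⟨g, _, hg⟩ => hg ▸ risk_nonneg P₀ y₀ g⟩ ⟨h₀, h₀H, rfl⟩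
  have inf₁ : sInf (risk P₁ y₁ '' H) ≤ L₁ :=
    csInf_le ⟨0, fun r ⟨g, _, hg⟩ => hg ▸ risk_nonneg P₁ y₁ g⟩ ⟨h₁, h₁H, rfl⟩
  have step2 : max (sInf (risk P₀ y₀ '' H)) (sInf (risk P₁ y₁ '' H)) ≤ L₀ + L₁ := by
    have n₀ := risk_nonneg P₀ y₀ h₀
    have n₁ := risk_nonneg P₁ y₁ h₁
    apply max_le <;> linarith
  unfold benefitOfSplitting
  linarith
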